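/- Let G be a connected k-regular finite simple graph with n vertices and m edges, where k > 2. Then the characteristic polynomial of the positive support (U²)⁺ of the square of the Grover transition matrix satisfies, for every complex number λ, det(λ·I_{2m} − (U²)⁺) = (λ − 2)^{2(m−n)} · det(λ²·I_n − λ·(A(G)² − (2k−4)·I_n) + (A(G)² + (k−2)²·I_n)). Equivalently, (U²)⁺ has 2n eigenvalues of the form λ = (λ_A² − 2k + 4)/2 ± i·λ_A·√(4k − 4 − λ_A²)/2 with λ_A an eigenvalue of A(G), and the remaining 2(m−n) eigenvalues are all equal to 2. -/

import Mathlib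

open Matrix SimpleGraph

variable {V : Type*} [Fintype V] [DecidableEq V]

/-- The Grover transition matrix `U` of a graph `G`, indexed by darts (arcs):
`U e f = 2/deg(t(f)) - 1` if `f = e⁻¹`, `U e f = 2/deg(t(f))` if `t(f) = o(e)` and
`f ≠ e⁻¹`, and `0` otherwise.  (When `t(f) = o(e)` we have `deg (t f) = deg (o e)`.) -/
noncomputable def grover (G : SimpleGraph V) [DecidableRel G.Adj] :
    Matrix G.Dart G.Dart ℝ := fun e f =>
  if f = e.symm then 2 / (G.degree e.toProd.1) - 1
  else if f.toProd.2 = e.toProd.1 then 2 / (G.degree e.toProd.1) else 0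

/-- The positive support of a real square matrix. -/
noncomputable def posSupp {α : Type*} (M : Matrix α α ℝ) : Matrix α α ℝ :=
  fun i j => if 0 < M i j then 1 else 0

/-- The matrix `B` with `B e f = 1` iff `t(e) = o(f)`. -/
def Bmat (G : SimpleGraph V) [DecidableRel G.Adj] : Matrix G.Dart G.Dart ℝ :=
  fun e f => if e.toProd.2 = f.toProd.1 then 1 else 0

/-- The arc-inversion matrix `J₀` with `(J₀) e f = 1` iff `f = e⁻¹`. -/
def J0 (G : SimpleGraph V) [DecidableRel G.Adj] : Matrix G.Dart G.Dart ℝ :=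
  fun e f => if f = e.symm then 1 else 0

/-- The diagonal degree matrix of `G`. -/
noncomputable def degMat (G : SimpleGraph V) [DecidableRel G.Adj] : Matrix V V ℝ :=
  Matrix.diagonal fun v => (G.degree v : ℝ)


set_option linter.unusedSectionVars false
set_option linter.unusedVariables false

section Aux

variable (G : SimpleGraph V) [DecidableRel G.Adj]

/-- `W` is the claimed positive support of `U²`. -/
def Wmat : Matrix G.Dart G.Dart ℝ := fun e g =>
  if g = e ∨ (G.Adj e.toProd.1 g.toProd.2 ∧ g.toProd.1 ≠ e.toProd.1 ∧ g.toProd.2 ≠ e.toProd.2)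
  then 1 else 0

variable {G}

lemma grover_apply' {k : ℕ} (hreg : G.IsRegularOfDegree k) (e f : G.Dart) :
    grover G e f = if f.toProd.2 = e.toProd.1 then
      (if f = e.symm then 2/(k:ℝ) - 1 else 2/(k:ℝ)) else 0 := by
  unfold grover
  rw [hreg e.toProd.1]
  by_cases h : f = e.symm
  · subst h; simp
  · simp [h]

lemma posSupp_grover_sq {k : ℕ} (hreg : G.IsRegularOfDegree k) (hk : 2 < k) :
    posSupp ((grover G) ^ 2) = Wmat G := by
  have hk0 : (0:ℝ) < k := by positivity
  have hc0 : (0:ℝ) < 2/(k:ℝ) := by positivity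
  have hc1 : 2/(k:ℝ) < 1 := by
    rw [div_lt_one hk0]; exact_mod_cast hk
  funext e g
  have hsq : ((grover G)^2) e g = ∑ f, grover G e f * grover G f g := by
    rw [pow_two, Matrix.mul_apply]
  by_cases hadj : G.Adj g.toProd.2 e.toProd.1
  · set d0 : G.Dart := ⟨(g.toProd.2, e.toProd.1), hadj⟩ with hd0
    have hval : ((grover G)^2) e g
        = (if g.toProd.2 = e.toProd.2 then 2/(k:ℝ) - 1 else 2/(k:ℝ)) *
          (if g.toProd.1 = e.toProd.1 then 2/(k:ℝ) - 1 else 2/(k:ℝ)) := by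
      rw [hsq, Finset.sum_eq_single d0]
      · rw [grover_apply' hreg, grover_apply' hreg]
        have h1 : (d0 = e.symm) = (g.toProd.2 = e.toProd.2) := by
          simp [Dart.ext_iff, hd0, Prod.ext_iff]
        have h2 : (g = d0.symm) = (g.toProd.1 = e.toProd.1) := by
          simp [Dart.ext_iff, hd0, Prod.ext_iff]
        have h3 : d0.toProd.2 = e.toProd.1 := rfl
        have h4 : g.toProd.2 = d0.toProd.1 := rfl
        rw [if_pos h3, if_pos h4]; simp only [h1, h2]
      · intro f _ hf
        rw [grover_apply' hreg, grover_apply' hreg]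
        by_cases h1 : f.toProd.2 = e.toProd.1
        · by_cases h2 : g.toProd.2 = f.toProd.1
          · exact absurd (Dart.ext f d0 (Prod.ext h2.symm h1)) hf
          · simp [h2]
        · simp [h1]
      · intro h; exact absurd (Finset.mem_univ d0) h
    show (if 0 < (grover G ^ 2) e g then (1:ℝ) else 0) = _
    rw [hval]
    by_cases h1 : g.toProd.1 = e.toProd.1 <;> by_cases h2 : g.toProd.2 = e.toProd.2
    · have hge : g = e := Dart.ext g e (Prod.ext h1 h2)
      have hpos : (0:ℝ) < (2/(k:ℝ) - 1) * (2/(k:ℝ) - 1) :=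
        mul_pos_of_neg_of_neg (by linarith) (by linarith)
      rw [if_pos h2, if_pos h1, if_pos hpos, Wmat, if_pos (Or.inl hge)]
    · have hneg : ¬ (0:ℝ) < 2/(k:ℝ) * (2/(k:ℝ) - 1) :=
        not_lt.2 (le_of_lt (mul_neg_of_pos_of_neg hc0 (by linarith)))
      have hw : ¬ (g = e ∨ (G.Adj e.toProd.1 g.toProd.2 ∧ g.toProd.1 ≠ e.toProd.1 ∧
          g.toProd.2 ≠ e.toProd.2)) := by
        rintro (rfl | ⟨-, hx, -⟩); exacts [h2 rfl, hx h1]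
      rw [if_neg h2, if_pos h1, if_neg hneg, Wmat, if_neg hw]
    · have hneg : ¬ (0:ℝ) < (2/(k:ℝ) - 1) * (2/(k:ℝ)) :=
        not_lt.2 (le_of_lt (mul_neg_of_neg_of_pos (by linarith) hc0))
      have hw : ¬ (g = e ∨ (G.Adj e.toProd.1 g.toProd.2 ∧ g.toProd.1 ≠ e.toProd.1 ∧
          g.toProd.2 ≠ e.toProd.2)) := by
        rintro (rfl | ⟨-, -, hx⟩); exacts [h1 rfl, hx h2]
      rw [if_pos h2, if_neg h1, if_neg hneg, Wmat, if_neg hw]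
    · have hpos : (0:ℝ) < 2/(k:ℝ) * (2/(k:ℝ)) := mul_pos hc0 hc0
      rw [if_neg h2, if_neg h1, if_pos hpos, Wmat, if_pos (Or.inr ⟨hadj.symm, h1, h2⟩)]
  · have hval : ((grover G)^2) e g = 0 := by
      rw [hsq]
      apply Finset.sum_eq_zero
      intro f _
      rw [grover_apply' hreg, grover_apply' hreg]
      by_cases h1 : f.toProd.2 = e.toProd.1
      · by_cases h2 : g.toProd.2 = f.toProd.1
        · exact absurd (by rw [h2, ← h1]; exact f.adj) hadj
        · simp [h2]
      · simp [h1]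
    have hw : ¬ (g = e ∨ (G.Adj e.toProd.1 g.toProd.2 ∧ g.toProd.1 ≠ e.toProd.1 ∧
        g.toProd.2 ≠ e.toProd.2)) := by
      rintro (rfl | ⟨ha, -, -⟩)
      · exact hadj g.adj.symm
      · exact hadj ha.symm
    simp [posSupp, Wmat, hval, hw]

end Aux

section Aux2
variable (G : SimpleGraph V) [DecidableRel G.Adj]

/-- tail incidence matrix -/
def Pmat : Matrix V G.Dart ℂ := fun v e => if e.toProd.1 = v then 1 else 0
/-- head incidence matrix -/
def Qmat : Matrix V G.Dart ℂ := fun v e => if e.toProd.2 = v then 1 else 0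

variable {G}

lemma Pmat_mul_Pmat_t {k : ℕ} (hreg : G.IsRegularOfDegree k) :
    Pmat G * (Pmat G)ᵀ = (k:ℂ) • 1 := by
  ext u v
  simp only [Matrix.mul_apply, Pmat, transpose_apply, Matrix.smul_apply, one_apply, smul_eq_mul,
    ite_mul, one_mul, zero_mul]
  by_cases huv : u = v
  · subst huv
    rw [if_pos rfl, mul_one]
    have hterm : ∀ e : G.Dart,
        (if e.toProd.1 = u then (if e.toProd.1 = u then (1:ℂ) else 0) else 0)
        = if e.toProd.1 = u then 1 else 0 := fun e => by split_ifs <;> rfl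
    rw [Finset.sum_congr rfl fun e _ => hterm e, Finset.sum_boole]
    have hfib : ({d : G.Dart | d.fst = u} : Finset _).card = G.degree u :=
      G.dart_fst_fiber_card_eq_degree u
    norm_cast
    rw [show (Finset.univ.filter fun e : G.Dart => e.toProd.1 = u)
        = ({d : G.Dart | d.fst = u} : Finset _) from rfl, hfib, hreg u]
  · rw [if_neg huv, mul_zero]
    apply Finset.sum_eq_zero
    intro e _
    split_ifs with ha hb
    · exact absurd (ha ▸ hb) huv
    · rfl
    · rfl

lemma Pmat_mul_Qmat_t : Pmat G * (Qmat G)ᵀ = G.adjMatrix ℂ := by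
  ext u v
  simp only [Matrix.mul_apply, Pmat, Qmat, transpose_apply, adjMatrix_apply]
  by_cases hadj : G.Adj u v
  · rw [Finset.sum_eq_single (⟨(u, v), hadj⟩ : G.Dart)]
    · simp [hadj]
    · intro f _ hf
      by_cases h1 : f.toProd.1 = u
      · by_cases h2 : f.toProd.2 = v
        · exact absurd (Dart.ext f ⟨(u, v), hadj⟩ (Prod.ext h1 h2)) hf
        · simp [h2]
      · simp [h1]
    · intro h; exact absurd (Finset.mem_univ _) h
  · rw [if_neg hadj]
    apply Finset.sum_eq_zero
    intro f _
    by_cases h1 : f.toProd.1 = u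
    · by_cases h2 : f.toProd.2 = v
      · exact absurd (by rw [← h1, ← h2]; exact f.adj) hadj
      · simp [h2]
    · simp [h1]

lemma sum_darts_symm {M : Type*} [AddCommMonoid M] (G : SimpleGraph V) [DecidableRel G.Adj]
    (f : G.Dart → M) : ∑ e : G.Dart, f e.symm = ∑ e : G.Dart, f e :=
  Fintype.sum_equiv (Function.Involutive.toPerm _ Dart.symm_involutive)
    (fun e => f e.symm) f (fun e => rfl)

lemma Qmat_eq_Pmat_symm (v : V) (e : G.Dart) : Qmat G v e = Pmat G v e.symm := rfl
lemma Pmat_eq_Qmat_symm (v : V) (e : G.Dart) : Pmat G v e = Qmat G v e.symm := rfl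

lemma Qmat_mul_Qmat_t {k : ℕ} (hreg : G.IsRegularOfDegree k) :
    Qmat G * (Qmat G)ᵀ = (k:ℂ) • 1 := by
  have h : Qmat G * (Qmat G)ᵀ = Pmat G * (Pmat G)ᵀ := by
    ext u v
    simp only [Matrix.mul_apply, transpose_apply]
    rw [← sum_darts_symm G (fun e => Pmat G u e * Pmat G v e)]
    rfl
  rw [h, Pmat_mul_Pmat_t hreg]

lemma Qmat_mul_Pmat_t : Qmat G * (Pmat G)ᵀ = G.adjMatrix ℂ := by
  have h : Qmat G * (Pmat G)ᵀ = Pmat G * (Qmat G)ᵀ := by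
    ext u v
    simp only [Matrix.mul_apply, transpose_apply]
    rw [← sum_darts_symm G (fun e => Pmat G u e * Qmat G v e)]
    rfl
  rw [h, Pmat_mul_Qmat_t]

end Aux2

section Aux3
variable {G : SimpleGraph V} [DecidableRel G.Adj]

lemma Pmat_t_mul_Pmat (e g : G.Dart) :
    ((Pmat G)ᵀ * Pmat G) e g = if g.toProd.1 = e.toProd.1 then 1 else 0 := by
  simp only [Matrix.mul_apply, transpose_apply, Pmat, ite_mul, one_mul, zero_mul]
  rw [Finset.sum_ite_eq Finset.univ e.toProd.1 (fun v => if g.toProd.1 = v then (1:ℂ) else 0),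
    if_pos (Finset.mem_univ _)]

lemma Qmat_t_mul_Qmat (e g : G.Dart) :
    ((Qmat G)ᵀ * Qmat G) e g = if g.toProd.2 = e.toProd.2 then 1 else 0 := by
  simp only [Matrix.mul_apply, transpose_apply, Qmat, ite_mul, one_mul, zero_mul]
  rw [Finset.sum_ite_eq Finset.univ e.toProd.2 (fun v => if g.toProd.2 = v then (1:ℂ) else 0),
    if_pos (Finset.mem_univ _)]

lemma Pmat_t_mul_adj_mul_Qmat (e g : G.Dart) :
    ((Pmat G)ᵀ * G.adjMatrix ℂ * Qmat G) e g
      = if G.Adj e.toProd.1 g.toProd.2 then 1 else 0 := by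
  have h1 : ∀ v, ((Pmat G)ᵀ * G.adjMatrix ℂ) e v = G.adjMatrix ℂ e.toProd.1 v := by
    intro v
    simp only [Matrix.mul_apply, transpose_apply, Pmat, ite_mul, one_mul, zero_mul]
    rw [Finset.sum_ite_eq Finset.univ e.toProd.1 (fun u => G.adjMatrix ℂ u v),
      if_pos (Finset.mem_univ _)]
  rw [Matrix.mul_apply, Finset.sum_congr rfl fun v _ => by rw [h1 v]]
  simp only [Qmat, mul_ite, mul_one, mul_zero]
  rw [Finset.sum_ite_eq Finset.univ g.toProd.2 (fun v => G.adjMatrix ℂ e.toProd.1 v),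
    if_pos (Finset.mem_univ _), adjMatrix_apply]

lemma Wmat_map_eq :
    (Wmat G).map (fun x : ℝ => (x : ℂ)) =
      (2:ℂ) • (1 : Matrix G.Dart G.Dart ℂ) - (Pmat G)ᵀ * Pmat G - (Qmat G)ᵀ * Qmat G
        + (Pmat G)ᵀ * G.adjMatrix ℂ * Qmat G := by
  ext e g
  simp only [Matrix.map_apply, Wmat, Matrix.add_apply, Matrix.sub_apply, Matrix.smul_apply,
    Matrix.one_apply, Pmat_t_mul_Pmat, Qmat_t_mul_Qmat, Pmat_t_mul_adj_mul_Qmat, smul_eq_mul]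
  by_cases hge : g = e
  · subst hge
    simp [g.adj]; norm_num
  · rw [if_neg (Ne.symm hge)]
    by_cases h1 : g.toProd.1 = e.toProd.1 <;> by_cases h2 : g.toProd.2 = e.toProd.2
    · exact absurd (Dart.ext g e (Prod.ext h1 h2)) hge
    · have hadj : G.Adj e.toProd.1 g.toProd.2 := h1 ▸ g.adj
      have hw : ¬ (g = e ∨ (G.Adj e.toProd.1 g.toProd.2 ∧ g.toProd.1 ≠ e.toProd.1 ∧
          g.toProd.2 ≠ e.toProd.2)) := by
        rintro (h | ⟨-, hx, -⟩); exacts [hge h, hx h1]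
      rw [if_neg hw, if_pos h1, if_neg h2, if_pos hadj]
      norm_num
    · have hadj : G.Adj e.toProd.1 g.toProd.2 := h2 ▸ e.adj
      have hw : ¬ (g = e ∨ (G.Adj e.toProd.1 g.toProd.2 ∧ g.toProd.1 ≠ e.toProd.1 ∧
          g.toProd.2 ≠ e.toProd.2)) := by
        rintro (h | ⟨-, -, hx⟩); exacts [hge h, hx h2]
      rw [if_neg hw, if_neg h1, if_pos h2, if_pos hadj]
      norm_num
    · rw [if_neg h1, if_neg h2]
      by_cases hadj : G.Adj e.toProd.1 g.toProd.2
      · rw [if_pos (Or.inr ⟨hadj, h1, h2⟩), if_pos hadj]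
        norm_num
      · have hw : ¬ (g = e ∨ (G.Adj e.toProd.1 g.toProd.2 ∧ g.toProd.1 ≠ e.toProd.1 ∧
            g.toProd.2 ≠ e.toProd.2)) := by
          rintro (h | ⟨hx, -, -⟩); exacts [hge h, hadj hx]
        rw [if_neg hw, if_neg hadj]
        norm_num
end Aux3

lemma wa_det {a b : Type*} [Fintype a] [Fintype b] [DecidableEq a] [DecidableEq b]
    {c : ℂ} (hc : c ≠ 0) (X : Matrix a b ℂ) (Y : Matrix b a ℂ) :
    c ^ (Fintype.card b) * (c • (1 : Matrix a a ℂ) + X * Y).det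
      = c ^ (Fintype.card a) * (c • (1 : Matrix b b ℂ) + Y * X).det := by
  have h1 : c • (1 : Matrix a a ℂ) + X * Y = c • (1 + X * (c⁻¹ • Y)) := by
    rw [smul_add, Matrix.mul_smul, smul_smul, mul_inv_cancel₀ hc, one_smul]
  have h2 : c • (1 : Matrix b b ℂ) + Y * X = c • (1 + (c⁻¹ • Y) * X) := by
    rw [smul_add, Matrix.smul_mul, smul_smul, mul_inv_cancel₀ hc, one_smul]
  rw [h1, h2, Matrix.det_smul, Matrix.det_smul, Matrix.det_one_add_mul_comm]
  ring

lemma main_generic {G : SimpleGraph V} [DecidableRel G.Adj] {k : ℕ}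
    (hreg : G.IsRegularOfDegree k) (hnm : Fintype.card V ≤ G.edgeFinset.card)
    (lam : ℂ) (h2 : lam ≠ 2) (hs : lam + (k:ℂ) - 2 ≠ 0) :
    (lam • (1 : Matrix G.Dart G.Dart ℂ) - (Wmat G).map (fun x:ℝ => (x:ℂ))).det =
      (lam - 2) ^ (2 * (G.edgeFinset.card - Fintype.card V)) *
        (lam ^ 2 • (1 : Matrix V V ℂ) -
          lam • ((G.adjMatrix ℂ) ^ 2 - (2 * (k : ℂ) - 4) • (1 : Matrix V V ℂ)) +
          ((G.adjMatrix ℂ) ^ 2 + ((k : ℂ) - 2) ^ 2 • (1 : Matrix V V ℂ))).det := by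
  have hc : lam - 2 ≠ 0 := sub_ne_zero_of_ne h2
  set A := G.adjMatrix ℂ with hA
  set P := Pmat G with hP
  set Q := Qmat G with hQ
  set c := lam - 2 with hcdef
  set s := lam + (k:ℂ) - 2 with hsdef
  set Xm := Matrix.fromCols Pᵀ Qᵀ with hXm
  set Ym := Matrix.fromRows (P - A * Q) Q with hYm
  have step1 : lam • (1 : Matrix G.Dart G.Dart ℂ) - (Wmat G).map (fun x:ℝ => (x:ℂ))
      = c • 1 + Xm * Ym := by
    rw [Wmat_map_eq, hXm, hYm, Matrix.fromCols_mul_fromRows, Matrix.mul_sub, hcdef,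
      sub_smul, Matrix.mul_assoc]
    abel
  have hcardD : Fintype.card G.Dart = 2 * G.edgeFinset.card := G.dart_card_eq_twice_card_edges
  have hcardS : Fintype.card (V ⊕ V) = 2 * Fintype.card V := by
    simp [Fintype.card_sum, two_mul]
  have hwa := wa_det hc Xm Ym
  have hpow : c ^ (Fintype.card G.Dart)
      = c ^ (Fintype.card (V ⊕ V)) * c ^ (2 * (G.edgeFinset.card - Fintype.card V)) := by
    rw [← pow_add]
    congr 1
    rw [hcardD, hcardS]
    omega
  have hdet1 : (c • 1 + Xm * Ym).det
      = c ^ (2 * (G.edgeFinset.card - Fintype.card V)) * (c • 1 + Ym * Xm).det := by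
    rw [hpow, mul_assoc] at hwa
    exact mul_left_cancel₀ (pow_ne_zero _ hc) hwa
  have hPP : P * Pᵀ = (k:ℂ) • 1 := Pmat_mul_Pmat_t hreg
  have hQQ : Q * Qᵀ = (k:ℂ) • 1 := Qmat_mul_Qmat_t hreg
  have hPQ : P * Qᵀ = A := Pmat_mul_Qmat_t
  have hQP : Q * Pᵀ = A := Qmat_mul_Pmat_t
  have step3 : Ym * Xm = Matrix.fromBlocks ((k:ℂ) • 1 - A * A) (A - (k:ℂ) • A) A ((k:ℂ) • 1) := by
    rw [hYm, hXm, Matrix.fromRows_mul_fromCols, Matrix.sub_mul, Matrix.sub_mul,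
      Matrix.mul_assoc, Matrix.mul_assoc, hPP, hQQ, hPQ, hQP, Matrix.mul_smul, Matrix.mul_one]
  have hcks : c + (k:ℂ) = s := by rw [hcdef, hsdef]; ring
  have step4 : c • (1 : Matrix (V ⊕ V) (V ⊕ V) ℂ) + Ym * Xm
      = Matrix.fromBlocks (s • 1 - A * A) (A - (k:ℂ) • A) A (s • 1) := by
    rw [step3, ← Matrix.fromBlocks_one, Matrix.fromBlocks_smul, Matrix.fromBlocks_add]
    have hb11 : c • (1 : Matrix V V ℂ) + ((k:ℂ) • 1 - A * A) = s • 1 - A * A := by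
      rw [← add_sub_assoc, ← add_smul, hcks]
    have hb12 : c • (0 : Matrix V V ℂ) + (A - (k:ℂ) • A) = A - (k:ℂ) • A := by
      rw [smul_zero, zero_add]
    have hb21 : c • (0 : Matrix V V ℂ) + A = A := by rw [smul_zero, zero_add]
    have hb22 : c • (1 : Matrix V V ℂ) + (k:ℂ) • 1 = s • 1 := by rw [← add_smul, hcks]
    rw [hb11, hb12, hb21, hb22]
  set UL := (s*s) • (1 : Matrix V V ℂ) - s • (A*A) - A*A + (k:ℂ) • (A*A) with hUL
  set T := Matrix.fromBlocks (s • (1 : Matrix V V ℂ) - A * A) (A - (k:ℂ) • A) A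
    (s • (1 : Matrix V V ℂ)) with hT
  set R := Matrix.fromBlocks (s • (1 : Matrix V V ℂ)) (0 : Matrix V V ℂ) (-A) (1 : Matrix V V ℂ) with hR
  have hTR : T * R = Matrix.fromBlocks UL (A - (k:ℂ) • A) 0 (s • 1) := by
    rw [hT, hR, Matrix.fromBlocks_multiply]
    have hb11 : (s • (1 : Matrix V V ℂ) - A * A) * (s • 1) + (A - (k:ℂ) • A) * (-A) = UL := by
      rw [Matrix.mul_smul, Matrix.mul_one, Matrix.mul_neg, Matrix.sub_mul, Matrix.smul_mul,
        smul_sub, smul_smul, hUL]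
      abel
    have hb12 : (s • (1 : Matrix V V ℂ) - A * A) * 0 + (A - (k:ℂ) • A) * 1
        = A - (k:ℂ) • A := by
      rw [Matrix.mul_zero, Matrix.mul_one, zero_add]
    have hb21 : A * (s • (1 : Matrix V V ℂ)) + s • (1 : Matrix V V ℂ) * (-A) = 0 := by
      rw [Matrix.mul_smul, Matrix.mul_one, Matrix.smul_mul, Matrix.one_mul, smul_neg,
        add_neg_cancel]
    have hb22 : A * (0 : Matrix V V ℂ) + s • (1 : Matrix V V ℂ) * 1 = s • 1 := by
      rw [Matrix.mul_zero, Matrix.mul_one, zero_add]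
    rw [hb11, hb12, hb21, hb22]
  have hdetR : R.det = s ^ (Fintype.card V) := by
    rw [hR, Matrix.det_fromBlocks_zero₁₂, Matrix.det_one, mul_one, Matrix.det_smul,
      Matrix.det_one, mul_one]
  have hdetT : T.det = UL.det := by
    have h := congrArg Matrix.det hTR
    rw [Matrix.det_mul, hdetR, Matrix.det_fromBlocks_zero₂₁, Matrix.det_smul, Matrix.det_one,
      mul_one] at h
    exact mul_right_cancel₀ (pow_ne_zero _ hs) h
  have step6 : UL = lam ^ 2 • (1 : Matrix V V ℂ) -
      lam • (A ^ 2 - (2 * (k : ℂ) - 4) • (1 : Matrix V V ℂ)) +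
      (A ^ 2 + ((k : ℂ) - 2) ^ 2 • (1 : Matrix V V ℂ)) := by
    rw [hUL, hsdef, pow_two A]
    ext i j
    simp only [Matrix.sub_apply, Matrix.add_apply, Matrix.smul_apply, Matrix.one_apply,
      smul_eq_mul]
    split_ifs <;> ring
  rw [step1, hdet1, step4, hdetT, step6]


open Polynomial in
/-- Emms–Hancock–Severini–Wilson: characteristic polynomial of `(U²)⁺` for a
connected `k`-regular graph with `k > 2`. -/
theorem charpoly_posSupp_grover_sq (G : SimpleGraph V) [DecidableRel G.Adj] (k : ℕ)
    (hconn : G.Connected) (hreg : G.IsRegularOfDegree k) (hk : 2 < k) (lam : ℂ) :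
    Matrix.det (lam • (1 : Matrix G.Dart G.Dart ℂ) -
        (posSupp ((grover G) ^ 2)).map (fun x : ℝ => (x : ℂ))) =
      (lam - 2) ^ (2 * (G.edgeFinset.card - Fintype.card V)) *
        Matrix.det (lam ^ 2 • (1 : Matrix V V ℂ) -
          lam • ((G.adjMatrix ℂ) ^ 2 - (2 * (k : ℂ) - 4) • (1 : Matrix V V ℂ)) +
          ((G.adjMatrix ℂ) ^ 2 + ((k : ℂ) - 2) ^ 2 • (1 : Matrix V V ℂ))) := by

  classical
  have h2m : 2 * G.edgeFinset.card = Fintype.card V * k := by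
    rw [← G.sum_degrees_eq_twice_card_edges,
      Finset.sum_congr rfl fun v _ => hreg v, Finset.sum_const, smul_eq_mul, Finset.card_univ]
  have hnm : Fintype.card V ≤ G.edgeFinset.card := by
    have h := Nat.mul_le_mul_left (Fintype.card V) (le_of_lt hk)
    omega
  rw [posSupp_grover_sq hreg hk]
  set Wc : Matrix G.Dart G.Dart ℂ := (Wmat G).map (fun x : ℝ => (x:ℂ)) with hWc
  set p : Polynomial ℂ :=
    ((Polynomial.X : ℂ[X]) • (1 : Matrix G.Dart G.Dart ℂ[X]) - Wc.map Polynomial.C).det with hp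
  set Nq : Matrix V V ℂ[X] :=
    (Polynomial.X : ℂ[X])^2 • (1 : Matrix V V ℂ[X])
      - (Polynomial.X : ℂ[X]) • ((G.adjMatrix ℂ[X])^2 - Polynomial.C (2*(k:ℂ)-4) • 1)
      + ((G.adjMatrix ℂ[X])^2 + Polynomial.C (((k:ℂ)-2)^2) • 1) with hNq
  set q : Polynomial ℂ :=
    ((Polynomial.X : ℂ[X]) - Polynomial.C 2) ^ (2 * (G.edgeFinset.card - Fintype.card V))
      * Nq.det with hq
  have hevalp : ∀ t : ℂ, p.eval t = (t • (1 : Matrix G.Dart G.Dart ℂ) - Wc).det := by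
    intro t
    have h := (Polynomial.evalRingHom t).map_det
      ((Polynomial.X : ℂ[X]) • (1 : Matrix G.Dart G.Dart ℂ[X]) - Wc.map Polynomial.C)
    simp only [Polynomial.coe_evalRingHom] at h
    rw [hp, h]
    congr 1
    ext i j
    simp only [RingHom.mapMatrix_apply, Polynomial.coe_evalRingHom, Matrix.map_apply, Matrix.sub_apply, Matrix.smul_apply, Matrix.one_apply,
      smul_eq_mul, Polynomial.eval_sub, Polynomial.eval_mul, Polynomial.eval_X,
      Polynomial.eval_C, apply_ite (Polynomial.eval t), Polynomial.eval_one, Polynomial.eval_zero]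
  have hevalq : ∀ t : ℂ, q.eval t =
      (t - 2) ^ (2 * (G.edgeFinset.card - Fintype.card V)) *
        (t ^ 2 • (1 : Matrix V V ℂ) -
          t • ((G.adjMatrix ℂ) ^ 2 - (2 * (k : ℂ) - 4) • (1 : Matrix V V ℂ)) +
          ((G.adjMatrix ℂ) ^ 2 + ((k : ℂ) - 2) ^ 2 • (1 : Matrix V V ℂ))).det := by
    intro t
    have h := (Polynomial.evalRingHom t).map_det Nq
    simp only [Polynomial.coe_evalRingHom] at h
    rw [hq, Polynomial.eval_mul, Polynomial.eval_pow, Polynomial.eval_sub, Polynomial.eval_X,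
      Polynomial.eval_C, h]
    congr 2
    ext i j
    simp only [hNq, RingHom.mapMatrix_apply, Polynomial.coe_evalRingHom, Matrix.map_apply, Matrix.add_apply, Matrix.sub_apply, Matrix.smul_apply,
      Matrix.one_apply, smul_eq_mul, pow_two, Matrix.mul_apply, adjMatrix_apply,
      Polynomial.eval_sub, Polynomial.eval_add, Polynomial.eval_mul, Polynomial.eval_pow,
      Polynomial.eval_X, Polynomial.eval_C, Polynomial.eval_finset_sum,
      apply_ite (Polynomial.eval t), Polynomial.eval_one, Polynomial.eval_zero]
  have hpq : p = q := by
    apply Polynomial.eq_of_infinite_eval_eq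
    have hsub : ({(2:ℂ), 2 - (k:ℂ)} : Set ℂ)ᶜ ⊆ {x | Polynomial.eval x p = Polynomial.eval x q} := by
      intro t ht
      simp only [Set.mem_compl_iff, Set.mem_insert_iff, Set.mem_singleton_iff, not_or] at ht
      rw [Set.mem_setOf_eq, hevalp, hevalq, hWc]
      exact main_generic hreg hnm t ht.1 (fun h => ht.2 (by linear_combination h))
    exact Set.Infinite.mono hsub (Set.Finite.infinite_compl (Set.toFinite _))
  have hfin := congrArg (Polynomial.eval lam) hpq
  rw [hevalp lam, hevalq lam] at hfin
  exact hfin
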